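/- For the complete {1,r}-graph K_t^{{1,r}} on t vertices and constant α > 0, the maximum over the standard simplex of Σ_{i=1}^t x_i + α Σ_{e ∈ [t]^{(r)}} Π_{v∈e} x_v equals 1 + α · Π_{i=1}^{r−1}(t−i) / (r! · t^{r−1}), attained at the uniform weighting x_i = 1/t. -/

import Mathlib

open Finset

def simplexS (n : ℕ) : Set (Fin n → ℝ) :=
  {x | (∀ i, 0 ≤ x i) ∧ ∑ i, x i = 1}

/-- L(K_t^{1,r}, x) = Σ_i x_i + α Σ_{e ∈ [t]^{(r)}} Π_{v∈e} x_v. -/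
def lagComplete1r (t r : ℕ) (α : ℝ) (x : Fin t → ℝ) : ℝ :=
  (∑ i, x i) + α * ∑ e ∈ (Finset.univ : Finset (Fin t)).powersetCard r, ∏ v ∈ e, x v


noncomputable def esum {t : ℕ} (x : Fin t → ℝ) (s : Finset (Fin t)) (n : ℕ) : ℝ :=
  ∑ e ∈ s.powersetCard n, ∏ v ∈ e, x v

lemma esum_nonneg {t : ℕ} {x : Fin t → ℝ} (hx : ∀ v, 0 ≤ x v) (s : Finset (Fin t)) (n : ℕ) :
    0 ≤ esum x s n :=
  Finset.sum_nonneg fun e _ => Finset.prod_nonneg fun v _ => hx v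

lemma esum_congr {t : ℕ} {x y : Fin t → ℝ} {s : Finset (Fin t)} (h : ∀ v ∈ s, x v = y v)
    (n : ℕ) : esum x s n = esum y s n :=
  Finset.sum_congr rfl fun e he => Finset.prod_congr rfl fun v hv =>
    h v ((Finset.mem_powersetCard.1 he).1 hv)

lemma esum_insert {t : ℕ} (x : Fin t → ℝ) {a : Fin t} {s : Finset (Fin t)} (ha : a ∉ s)
    (n : ℕ) : esum x (insert a s) (n + 1) = esum x s (n + 1) + x a * esum x s n := by
  unfold esum
  rw [Finset.powersetCard_succ_insert ha, Finset.sum_union, Finset.sum_image, Finset.mul_sum]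
  · congr 1
    refine Finset.sum_congr rfl fun e he => ?_
    rw [Finset.prod_insert fun hae => ha ((Finset.mem_powersetCard.1 he).1 hae)]
  · intro e1 h1 e2 h2 heq
    have ha1 : a ∉ e1 := fun h => ha ((Finset.mem_powersetCard.1 h1).1 h)
    have ha2 : a ∉ e2 := fun h => ha ((Finset.mem_powersetCard.1 h2).1 h)
    rw [← Finset.erase_insert ha1, ← Finset.erase_insert ha2, heq]
  · rw [Finset.disjoint_left]
    intro e he1 he2
    obtain ⟨e', he', rfl⟩ := Finset.mem_image.1 he2
    exact ha ((Finset.mem_powersetCard.1 he1).1 (Finset.mem_insert_self a e'))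

lemma esum_zero {t : ℕ} (x : Fin t → ℝ) (s : Finset (Fin t)) : esum x s 0 = 1 := by
  simp [esum]

lemma esum_one {t : ℕ} (x : Fin t → ℝ) (s : Finset (Fin t)) : esum x s 1 = ∑ v ∈ s, x v := by
  simp [esum, Finset.powersetCard_one, Finset.sum_map]

lemma univ_split {t : ℕ} {i j : Fin t} (hij : i ≠ j) :
    (Finset.univ : Finset (Fin t)) = insert i (insert j (Finset.univ \ {i, j})) := by
  ext v
  simp only [Finset.mem_insert, Finset.mem_sdiff, Finset.mem_univ, Finset.mem_singleton,
    true_and, true_iff]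
  by_cases h1 : v = i
  · tauto
  · by_cases h2 : v = j <;> simp [h1, h2]

lemma sum_split {t : ℕ} {i j : Fin t} (hij : i ≠ j) (f : Fin t → ℝ) :
    ∑ v, f v = f i + f j + ∑ v ∈ Finset.univ \ {i, j}, f v := by
  have hj : j ∉ (Finset.univ : Finset (Fin t)) \ {i, j} := by simp
  have hi : i ∉ insert j ((Finset.univ : Finset (Fin t)) \ {i, j}) := by simp [hij]
  conv_lhs => rw [univ_split hij]
  rw [Finset.sum_insert hi, Finset.sum_insert hj]
  ring

lemma esum_split {t : ℕ} {i j : Fin t} (hij : i ≠ j) (x : Fin t → ℝ) (n : ℕ) :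
    esum x Finset.univ (n + 2) =
      esum x (Finset.univ \ {i, j}) (n + 2)
        + (x i + x j) * esum x (Finset.univ \ {i, j}) (n + 1)
        + (x i * x j) * esum x (Finset.univ \ {i, j}) n := by
  have hj : j ∉ (Finset.univ : Finset (Fin t)) \ {i, j} := by simp
  have hi : i ∉ insert j ((Finset.univ : Finset (Fin t)) \ {i, j}) := by simp [hij]
  conv_lhs => rw [univ_split hij]
  rw [esum_insert x hi, esum_insert x hj, esum_insert x hj]
  ring
lemma exchange {t : ℕ} {x : Fin t → ℝ} (hx : ∀ v, 0 ≤ x v) {i j : Fin t} (hij : i ≠ j)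
    {a b : ℝ} (hab : a + b = x i + x j) (hprod : x i * x j ≤ a * b) (r : ℕ) :
    esum x Finset.univ r ≤
      esum (Function.update (Function.update x i a) j b) Finset.univ r := by
  set y := Function.update (Function.update x i a) j b with hy
  have hyi : y i = a := by
    rw [hy, Function.update_of_ne hij, Function.update_self]
  have hyj : y j = b := Function.update_self _ _ _
  have hyu : ∀ v ∈ Finset.univ \ ({i, j} : Finset (Fin t)), y v = x v := by
    intro v hv
    simp only [Finset.mem_sdiff, Finset.mem_insert, Finset.mem_singleton, not_or] at hv
    rw [hy, Function.update_of_ne hv.2.2, Function.update_of_ne hv.2.1]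
  match r with
  | 0 => simp [esum_zero]
  | 1 =>
    rw [esum_one, esum_one, sum_split hij x, sum_split hij y, hyi, hyj,
      Finset.sum_congr rfl hyu]
    linarith
  | (n + 2) =>
    rw [esum_split hij x n, esum_split hij y n, hyi, hyj,
      esum_congr hyu (n + 2), esum_congr hyu (n + 1), esum_congr hyu n, hab]
    have h0 : 0 ≤ esum x (Finset.univ \ {i, j}) n := esum_nonneg hx _ _
    nlinarith [h0]
lemma choose_formula (t r : ℕ) (ht : 0 < t) :
    (t.choose r : ℝ) * (1 / t) ^ r
      = (∏ i ∈ Finset.Icc 1 (r - 1), ((t : ℝ) - i)) / ((r.factorial : ℝ) * (t : ℝ) ^ (r - 1)) := by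
  have ht0 : (t : ℝ) ≠ 0 := Nat.cast_ne_zero.2 ht.ne'
  rcases Nat.eq_zero_or_pos r with rfl | hr
  · simp
  rcases lt_or_ge t r with hlt | hle
  · -- t < r : both sides are 0
    rw [Nat.choose_eq_zero_of_lt hlt]
    have : (∏ i ∈ Finset.Icc 1 (r - 1), ((t : ℝ) - i)) = 0 := by
      apply Finset.prod_eq_zero (i := t) (by rw [Finset.mem_Icc]; omega)
      simp
    rw [this]
    simp
  · -- 1 ≤ r ≤ t
    have hprod : (∏ i ∈ Finset.Icc 1 (r - 1), ((t : ℝ) - i))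
        = ((t - 1).descFactorial (r - 1) : ℝ) := by
      rw [Nat.descFactorial_eq_prod_range, Nat.cast_prod]
      rw [show Finset.Icc 1 (r - 1) = Finset.Ico 1 r by
        ext i; simp only [Finset.mem_Icc, Finset.mem_Ico]; omega]
      rw [Finset.prod_Ico_eq_prod_range]
      apply Finset.prod_congr (by congr 1)
      intro i hi
      rw [Finset.mem_range] at hi
      rw [Nat.cast_sub (by omega), Nat.cast_sub (by omega)]
      push_cast
      ring
    rw [hprod]
    have key : (t.choose r : ℝ) * (r.factorial : ℝ)
        = (t : ℝ) * ((t - 1).descFactorial (r - 1) : ℝ) := by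
      have h1 : t.descFactorial r = r.factorial * t.choose r :=
        Nat.descFactorial_eq_factorial_mul_choose t r
      have h2 : t.descFactorial r = t * (t - 1).descFactorial (r - 1) := by
        have := Nat.succ_descFactorial_succ (t - 1) (r - 1)
        rw [show t - 1 + 1 = t by omega, show r - 1 + 1 = r by omega] at this
        omega
      have h3 : t.choose r * r.factorial = t * ((t-1).descFactorial (r-1)) := by
        rw [Nat.mul_comm, ← h1, h2]
      exact_mod_cast h3
    have hfac : (r.factorial : ℝ) ≠ 0 := Nat.cast_ne_zero.2 r.factorial_ne_zero
    rw [eq_div_iff (by positivity)]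
    rw [show (1 / (t:ℝ)) ^ r = (1 / t) ^ (r - 1) * (1 / t) by
      rw [← pow_succ]; congr 1; omega]
    field_simp
    have hinv : (t:ℝ)^(r-1) * (t:ℝ)⁻¹^(r-1) = 1 := by
      rw [← mul_pow, mul_inv_cancel₀ ht0, one_pow]
    linear_combination key + ((t.choose r : ℝ) * (r.factorial : ℝ)) * hinv
lemma lag_eq {t : ℕ} (r : ℕ) (α : ℝ) (x : Fin t → ℝ) :
    lagComplete1r t r α x = (∑ i, x i) + α * esum x Finset.univ r := rfl

lemma uniform_mem (t : ℕ) (ht : 0 < t) : (fun _ : Fin t => (1 : ℝ) / t) ∈ simplexS t := by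
  have ht0 : (t : ℝ) ≠ 0 := Nat.cast_ne_zero.2 ht.ne'
  refine ⟨fun i => by positivity, ?_⟩
  rw [Finset.sum_const, Finset.card_univ, Fintype.card_fin, nsmul_eq_mul]
  field_simp

lemma esum_uniform (t r : ℕ) :
    esum (fun _ : Fin t => (1 : ℝ) / t) Finset.univ r = (t.choose r : ℝ) * (1 / t) ^ r := by
  unfold esum
  have h : ∀ e ∈ (Finset.univ : Finset (Fin t)).powersetCard r,
      ∏ _v ∈ e, ((1 : ℝ) / t) = (1 / (t : ℝ)) ^ r := by
    intro e he
    rw [Finset.prod_const, (Finset.mem_powersetCard.1 he).2]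
  rw [Finset.sum_congr rfl h, Finset.sum_const, Finset.card_powersetCard, Finset.card_univ,
    Fintype.card_fin, nsmul_eq_mul]

lemma lag_uniform (t r : ℕ) (ht : 0 < t) (α : ℝ) :
    lagComplete1r t r α (fun _ : Fin t => (1 : ℝ) / t)
      = 1 + α * (∏ i ∈ Finset.Icc 1 (r - 1), ((t : ℝ) - i)) /
        ((r.factorial : ℝ) * (t : ℝ) ^ (r - 1)) := by
  have hs : ∑ _i : Fin t, (1 : ℝ) / t = 1 := (uniform_mem t ht).2
  rw [lag_eq, esum_uniform, choose_formula t r ht, hs, mul_div_assoc]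

lemma lag_continuous (t r : ℕ) (α : ℝ) : Continuous (lagComplete1r t r α) := by
  apply Continuous.add
  · exact continuous_finset_sum _ fun i _ => continuous_apply i
  · exact continuous_const.mul (continuous_finset_sum _ fun e _ =>
      continuous_finset_prod _ fun v _ => continuous_apply v)

lemma simplex_isCompact (t : ℕ) : IsCompact (simplexS t) := by
  have hclosed : IsClosed (simplexS t) := by
    have heq : simplexS t
        = (⋂ i, {x : Fin t → ℝ | 0 ≤ x i}) ∩ {x : Fin t → ℝ | ∑ i, x i = 1} := by
      ext x; simp [simplexS, Set.mem_iInter]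
    rw [heq]
    exact (isClosed_iInter fun i => isClosed_le continuous_const (continuous_apply i)).inter
      (isClosed_eq (continuous_finset_sum _ fun i _ => continuous_apply i) continuous_const)
  apply IsCompact.of_isClosed_subset
    (isCompact_univ_pi fun _ : Fin t => isCompact_Icc (a := (0 : ℝ)) (b := 1)) hclosed
  intro x hx i _
  refine ⟨hx.1 i, ?_⟩
  calc x i ≤ ∑ j, x j := Finset.single_le_sum (fun j _ => hx.1 j) (Finset.mem_univ i)
  _ = 1 := hx.2

theorem lagrangian_complete_one_r (t r : ℕ) (ht : 0 < t) (α : ℝ) (hα : 0 < α) :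
    IsGreatest (lagComplete1r t r α '' simplexS t)
      (1 + α * (∏ i ∈ Finset.Icc 1 (r - 1), ((t : ℝ) - i)) /
        ((r.factorial : ℝ) * (t : ℝ) ^ (r - 1))) ∧
    (fun _ : Fin t => (1 : ℝ) / t) ∈ simplexS t ∧
    lagComplete1r t r α (fun _ : Fin t => (1 : ℝ) / t)
      = 1 + α * (∏ i ∈ Finset.Icc 1 (r - 1), ((t : ℝ) - i)) /
        ((r.factorial : ℝ) * (t : ℝ) ^ (r - 1)) := by
  have hcont := lag_continuous t r α
  have humem := uniform_mem t ht
  have hval := lag_uniform t r ht α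
  obtain ⟨x0, hx0S, hx0max⟩ :=
    (simplex_isCompact t).exists_isMaxOn ⟨_, humem⟩ hcont.continuousOn
  set K2 : Set (Fin t → ℝ) :=
    simplexS t ∩ {x | lagComplete1r t r α x = lagComplete1r t r α x0} with hK2def
  have hK2c : IsCompact K2 :=
    (simplex_isCompact t).inter_right (isClosed_eq hcont continuous_const)
  obtain ⟨z, hzK2, hzmin⟩ := hK2c.exists_isMinOn ⟨x0, hx0S, rfl⟩
    (continuous_finset_sum (f := fun i (x : Fin t → ℝ) => x i * x i) Finset.univ
      (fun i _ => (continuous_apply i).mul (continuous_apply i))).continuousOn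
  have hzS : z ∈ simplexS t := hzK2.1
  have hzval : lagComplete1r t r α z = lagComplete1r t r α x0 := hzK2.2
  have hconst : ∀ i j : Fin t, z i = z j := by
    by_contra hc
    push_neg at hc
    obtain ⟨i, j, hne⟩ := hc
    have hij : i ≠ j := fun h => hne (by rw [h])
    set c : ℝ := (z i + z j) / 2 with hc'
    have hc0 : 0 ≤ c := by
      have := hzS.1 i; have := hzS.1 j
      rw [hc']; linarith
    set y := Function.update (Function.update z i c) j c with hy
    have hyi : y i = c := by rw [hy, Function.update_of_ne hij, Function.update_self]
    have hyj : y j = c := Function.update_self _ _ _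
    have hyu : ∀ v ∈ Finset.univ \ ({i, j} : Finset (Fin t)), y v = z v := by
      intro v hv
      simp only [Finset.mem_sdiff, Finset.mem_insert, Finset.mem_singleton, not_or] at hv
      rw [hy, Function.update_of_ne hv.2.2, Function.update_of_ne hv.2.1]
    have hynn : ∀ v, 0 ≤ y v := by
      intro v
      rcases eq_or_ne v j with rfl | h1
      · rw [hyj]; exact hc0
      rcases eq_or_ne v i with rfl | h2
      · rw [hyi]; exact hc0
      · rw [hy, Function.update_of_ne h1, Function.update_of_ne h2]; exact hzS.1 v
    have hysum : ∑ v, y v = 1 := by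
      rw [sum_split hij y, hyi, hyj, Finset.sum_congr rfl hyu]
      have h2 := hzS.2
      rw [sum_split hij z] at h2
      rw [hc']; linarith
    have hyS : y ∈ simplexS t := ⟨hynn, hysum⟩
    have hprod : z i * z j ≤ c * c := by
      rw [hc']; nlinarith [sq_nonneg (z i - z j)]
    have hexch := exchange hzS.1 hij (by rw [hc']; ring) hprod r
    have hfy : lagComplete1r t r α z ≤ lagComplete1r t r α y := by
      rw [lag_eq, lag_eq, hzS.2, hysum]
      have h3 := mul_le_mul_of_nonneg_left hexch hα.le
      rw [← hy] at h3
      linarith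
    have hfy2 : lagComplete1r t r α y ≤ lagComplete1r t r α x0 := hx0max hyS
    have hyK2 : y ∈ K2 := ⟨hyS, le_antisymm hfy2 (hzval ▸ hfy)⟩
    have hgy : ∑ v, y v * y v < ∑ v, z v * z v := by
      rw [sum_split hij (fun v => y v * y v), sum_split hij (fun v => z v * z v)]
      rw [hyi, hyj, Finset.sum_congr rfl (fun v hv => by rw [hyu v hv])]
      rw [hc']
      have hpos : 0 < (z i - z j) * (z i - z j) :=
        mul_self_pos.2 (sub_ne_zero_of_ne hne)
      nlinarith [hpos]
    exact absurd (hzmin hyK2) (not_le.2 hgy)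
  have hz0 : z = fun _ : Fin t => (1 : ℝ) / t := by
    have ht0 : (t : ℝ) ≠ 0 := Nat.cast_ne_zero.2 ht.ne'
    have h1 : ∀ v, z v = z ⟨0, ht⟩ := fun v => hconst v ⟨0, ht⟩
    have h2 : (t : ℝ) * z ⟨0, ht⟩ = 1 := by
      rw [← hzS.2, Finset.sum_congr rfl (fun v _ => h1 v), Finset.sum_const,
        Finset.card_univ, Fintype.card_fin, nsmul_eq_mul]
    funext v
    rw [h1 v]
    field_simp
    linarith
  have hmax : lagComplete1r t r α x0
      = 1 + α * (∏ i ∈ Finset.Icc 1 (r - 1), ((t : ℝ) - i)) /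
        ((r.factorial : ℝ) * (t : ℝ) ^ (r - 1)) := by
    rw [← hzval, hz0, hval]
  refine ⟨⟨⟨_, humem, hval⟩, ?_⟩, humem, hval⟩
  rintro v ⟨x, hxS, rfl⟩
  calc lagComplete1r t r α x ≤ lagComplete1r t r α x0 := hx0max hxS
  _ = _ := hmax
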